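/- arXiv:1606.02028 — 3 statements merged into one kernel-verified Lean document; each statement's English description precedes it below -/
import Mathlib

section
/- Let Δ be a simplicial complex, let {s,w} and {t,w} be edges of Δ, and let u be a vertex not in Δ. Set Σ = ⟨{s,w,u},{t,w,u}⟩ and Γ = Δ ∪ Σ. Let Θ be a linear system of parameters for F[Γ] and ω a linear form. If (F[Δ]/(Θ,ω))_2 = 0 and ω is nonzero in F[Σ]/ΘF[Σ], then (F[Γ]/(Θ,ω))_2 = 0. -/
open MvPolynomial

/-- An (abstract) simplicial complex on the vertex set `V`: a collection of finite
subsets of `V` closed under taking subsets. -/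
def IsSimpComplex {V : Type*} (Δ : Set (Finset V)) : Prop :=
  ∀ σ ∈ Δ, ∀ τ, τ ⊆ σ → τ ∈ Δ

/-- The Stanley–Reisner ideal of `Δ`: generated by the squarefree monomials
corresponding to the nonempty non-faces of `Δ`. -/
noncomputable def stanleyReisnerIdeal (F : Type*) [Field F] {V : Type*}
    (Δ : Set (Finset V)) : Ideal (MvPolynomial V F) :=
  Ideal.span {m | ∃ σ : Finset V, σ.Nonempty ∧ σ ∉ Δ ∧ m = ∏ v ∈ σ, X v}

/-- `θ₁, …, θ_d` is a linear system of parameters for the Stanley–Reisner ring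
`F[Δ]`: each `θᵢ` is a linear form and the quotient of `F[Δ]` by them is a
finite-dimensional F-vector space. -/
def IsLSOP (F : Type*) [Field F] {V : Type*} (Δ : Set (Finset V)) {d : ℕ}
    (θ : Fin d → MvPolynomial V F) : Prop :=
  (∀ i, θ i ∈ homogeneousSubmodule V F 1) ∧
  FiniteDimensional F
    (MvPolynomial V F ⧸ (stanleyReisnerIdeal F Δ ⊔ Ideal.span (Set.range θ)))

/-- The geometric realization of `Δ`, as a subspace of `V → ℝ`. -/
def geomRealization {V : Type*} (Δ : Set (Finset V)) : Set (V → ℝ) :=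
  {f | (∀ v, 0 ≤ f v) ∧ ∃ σ ∈ Δ, (∀ v, f v ≠ 0 → v ∈ σ) ∧ ∑ v ∈ σ, f v = 1}

/-- A simplicial 2-sphere: a simplicial complex whose geometric realization is
homeomorphic to the 2-dimensional unit sphere. -/
def IsSimplicial2Sphere {V : Type*} (Δ : Set (Finset V)) : Prop :=
  IsSimpComplex Δ ∧
  Nonempty (geomRealization Δ ≃ₜ Metric.sphere (0 : EuclideanSpace ℝ (Fin 3)) 1)


section Helpers

open MvPolynomial

variable {V F : Type*} [Fintype V] [DecidableEq V] [Field F]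

set_option linter.unusedSectionVars false

private lemma deg_one_single {m : V →₀ ℕ} (hm : Finsupp.degree m = 1) :
    ∃ v, m = Finsupp.single v 1 := by
  have hne : m.support.Nonempty := by
    rw [Finsupp.support_nonempty_iff]
    rintro rfl; simp at hm
  obtain ⟨v, hv⟩ := hne
  have hle : m v ≤ 1 := hm ▸ Finsupp.le_degree v m
  have hge : 1 ≤ m v := Nat.one_le_iff_ne_zero.2 (Finsupp.mem_support_iff.1 hv)
  have hmv : m v = 1 := le_antisymm hle hge
  refine ⟨v, Finsupp.eq_single_iff.2 ⟨?_, hmv⟩⟩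
  intro x hx
  by_contra hxv
  have hxv' : x ≠ v := by simpa using hxv
  have : 2 ≤ Finsupp.degree m := by
    have hx' : x ∈ m.support.erase v := Finset.mem_erase.2 ⟨hxv', hx⟩
    have h2 : 1 ≤ ∑ i ∈ m.support.erase v, m i :=
      le_trans (Nat.one_le_iff_ne_zero.2 (Finsupp.mem_support_iff.1 hx))
        (Finset.single_le_sum (fun i _ => Nat.zero_le _) hx')
    calc 2 = 1 + 1 := rfl
    _ ≤ m v + ∑ i ∈ m.support.erase v, m i := Nat.add_le_add hge h2
    _ = Finsupp.degree m := by rw [Finsupp.degree_apply, ← Finset.add_sum_erase _ m hv]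
  omega

private lemma hom1_eq_sum {g : MvPolynomial V F} (hg : g ∈ homogeneousSubmodule V F 1) :
    g = ∑ v : V, C (coeff (Finsupp.single v 1) g) * X v := by
  rw [mem_homogeneousSubmodule] at hg
  ext m
  rw [coeff_sum]
  by_cases hm : ∃ v, m = Finsupp.single v 1
  · obtain ⟨v, rfl⟩ := hm
    rw [Finset.sum_eq_single v]
    · simp
    · intro b _ hb
      rw [coeff_C_mul, coeff_X', if_neg, mul_zero]
      intro h
      exact hb (by simpa [Finsupp.single_left_inj (one_ne_zero (α := ℕ))] using h)
    · simp
  · have h0 : coeff m g = 0 := by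
      by_contra h
      have := hg h
      replace this : Finsupp.degree m = 1 := by rw [Finsupp.degree_eq_weight_one]; exact this
      exact hm (deg_one_single this)
    rw [h0]
    symm
    apply Finset.sum_eq_zero
    intro v _
    rw [coeff_C_mul, coeff_X', if_neg, mul_zero]
    intro h; exact hm ⟨v, h.symm⟩

private lemma hc_mem_span {S : Set (MvPolynomial V F)}
    (hS : ∀ g ∈ S, ∃ d, g ∈ homogeneousSubmodule V F d) {p : MvPolynomial V F}
    (hp : p ∈ Ideal.span S) (n : ℕ) :
    homogeneousComponent n p ∈ Ideal.span S := by
  have key : ∀ (r g : MvPolynomial V F), g ∈ S →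
      homogeneousComponent n (r * g) ∈ Ideal.span S := by
    intro r g hgS
    obtain ⟨d, hd⟩ := hS g hgS
    have hr : r * g = ∑ i ∈ Finset.range (r.totalDegree + 1),
        homogeneousComponent i r * g := by
      rw [← Finset.sum_mul, sum_homogeneousComponent]
    rw [hr, map_sum]
    apply Ideal.sum_mem
    intro i _
    have hmem : homogeneousComponent i r * g ∈ homogeneousSubmodule V F (i + d) := by
      rw [mem_homogeneousSubmodule]
      exact (homogeneousComponent_isHomogeneous i r).mul
        ((mem_homogeneousSubmodule _ _).1 hd)
    rw [homogeneousComponent_of_mem hmem]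
    split_ifs
    · exact Ideal.mul_mem_left _ _ (Ideal.subset_span hgS)
    · exact Ideal.zero_mem _
  obtain ⟨c, hcsupp, rfl⟩ := Submodule.mem_span_set.1 hp
  rw [Finsupp.sum, map_sum]
  apply Ideal.sum_mem
  intro g hg
  rw [smul_eq_mul]
  exact key _ _ (hcsupp hg)

private lemma aeval_lin (coefAt : V → F) {g : MvPolynomial V F}
    (hg : g ∈ homogeneousSubmodule V F 1) :
    aeval (fun v => Polynomial.C (coefAt v) * Polynomial.X) g
      = Polynomial.C (∑ v : V, coeff (Finsupp.single v 1) g * coefAt v) * Polynomial.X := by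
  conv_lhs => rw [hom1_eq_sum hg]
  rw [map_sum, map_sum, Finset.sum_mul]
  apply Finset.sum_congr rfl
  intro v _
  rw [map_mul, aeval_C, aeval_X, Polynomial.algebraMap_eq, ← mul_assoc, ← Polynomial.C_mul]

private lemma sum_coefAt (s t u w : V) (hst : s ≠ t) (hsw : s ≠ w) (htw : t ≠ w)
    (hus : u ≠ s) (hut : u ≠ t) (huw : u ≠ w)
    (coefAt : V → F) (g : MvPolynomial V F)
    (hout : ∀ v, v ∉ ({s, t, w, u} : Finset V) → coefAt v = 0) :
    ∑ v : V, coeff (Finsupp.single v 1) g * coefAt v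
      = coeff (Finsupp.single s 1) g * coefAt s + coeff (Finsupp.single t 1) g * coefAt t
        + coeff (Finsupp.single w 1) g * coefAt w + coeff (Finsupp.single u 1) g * coefAt u := by
  rw [← Finset.sum_subset (Finset.subset_univ ({s, t, w, u} : Finset V))
    (fun v _ hv => by rw [hout v hv, mul_zero])]
  rw [Finset.sum_insert (by simp [hst, hsw, hus.symm]),
    Finset.sum_insert (by simp [htw, hut.symm]), Finset.sum_insert (by simp [huw.symm]),
    Finset.sum_singleton]
  ring

private lemma caseA' (Δ : Set (Finset V)) (s t u w : V)
    (hst : s ≠ t) (hsw : s ≠ w) (htw : t ≠ w)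
    (hus : u ≠ s) (hut : u ≠ t) (huw : u ≠ w)
    (hu : ∀ σ ∈ Δ, u ∉ σ)
    (Sg Γ : Set (Finset V))
    (hSg : Sg = {τ | τ ⊆ ({s, w, u} : Finset V) ∨ τ ⊆ ({t, w, u} : Finset V)})
    (hΓ : Γ = Δ ∪ Sg)
    (θ : Fin 3 → MvPolynomial V F) (hθ1 : ∀ i, θ i ∈ homogeneousSubmodule V F 1)
    (hfin : FiniteDimensional F
      (MvPolynomial V F ⧸ (stanleyReisnerIdeal F Γ ⊔ Ideal.span (Set.range θ))))
    (a : Fin 4 → F) (ha : a ≠ 0) (ha0 : a 0 = 0)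
    (hak : ∀ i, coeff (Finsupp.single s 1) (θ i) * a 0 + coeff (Finsupp.single t 1) (θ i) * a 1
      + coeff (Finsupp.single w 1) (θ i) * a 2 + coeff (Finsupp.single u 1) (θ i) * a 3 = 0) :
    False := by
  classical
  set coefAt : V → F := fun v =>
    if v = s then a 0 else if v = t then a 1 else if v = w then a 2
      else if v = u then a 3 else 0 with hcoefAt
  have hout : ∀ v, v ∉ ({s, t, w, u} : Finset V) → coefAt v = 0 := by
    intro v hv
    simp only [Finset.mem_insert, Finset.mem_singleton, not_or] at hv
    simp [hcoefAt, hv.1, hv.2.1, hv.2.2.1, hv.2.2.2]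
  have hcs : coefAt s = a 0 := by simp [hcoefAt]
  have hct : coefAt t = a 1 := by simp [hcoefAt, hst.symm]
  have hcw : coefAt w = a 2 := by simp [hcoefAt, hsw.symm, htw.symm]
  have hcu : coefAt u = a 3 := by simp [hcoefAt, hus, hut, huw]
  set φ : MvPolynomial V F →ₐ[F] Polynomial F :=
    aeval (fun v => Polynomial.C (coefAt v) * Polynomial.X) with hφ
  -- φ kills the ideal
  have hkill : ∀ x ∈ (stanleyReisnerIdeal F Γ ⊔ Ideal.span (Set.range θ)), φ x = 0 := by
    intro x hx
    have hle : (stanleyReisnerIdeal F Γ ⊔ Ideal.span (Set.range θ))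
        ≤ RingHom.ker (φ : MvPolynomial V F →+* Polynomial F) := by
      apply sup_le
      · rw [stanleyReisnerIdeal, Ideal.span_le]
        rintro m ⟨σ, hσne, hσΓ, rfl⟩
        simp only [SetLike.mem_coe, RingHom.mem_ker]
        show φ _ = 0
        rw [map_prod]
        by_cases hsσ : s ∈ σ
        · apply Finset.prod_eq_zero hsσ
          rw [hφ, aeval_X, hcs, ha0, map_zero, zero_mul]
        · have : ∃ v ∈ σ, v ∉ ({t, w, u} : Finset V) := by
            by_contra hcon
            push_neg at hcon
            exact hσΓ (hΓ ▸ Or.inr (hSg ▸ Or.inr (fun v hv => hcon v hv)))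
          obtain ⟨v, hvσ, hv3⟩ := this
          apply Finset.prod_eq_zero hvσ
          have : coefAt v = 0 := by
            apply hout
            simp only [Finset.mem_insert, Finset.mem_singleton, not_or] at hv3 ⊢
            exact ⟨fun h => hsσ (h ▸ hvσ), hv3⟩
          rw [hφ, aeval_X, this, map_zero, zero_mul]
      · rw [Ideal.span_le]
        rintro m ⟨i, rfl⟩
        simp only [SetLike.mem_coe, RingHom.mem_ker]
        show φ _ = 0
        rw [hφ, aeval_lin coefAt (hθ1 i),
          sum_coefAt s t u w hst hsw htw hus hut huw coefAt _ hout,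
          hcs, hct, hcw, hcu, hak i, map_zero, zero_mul]
    simpa using hle hx
  -- φ is surjective
  have hX : Polynomial.X ∈ φ.range := by
    obtain ⟨j, hj⟩ : ∃ j, a j ≠ 0 := Function.ne_iff.1 ha
    have : ∃ v, coefAt v = a j := by
      fin_cases j
      · exact ⟨s, hcs⟩
      · exact ⟨t, hct⟩
      · exact ⟨w, hcw⟩
      · exact ⟨u, hcu⟩
    obtain ⟨v, hv⟩ := this
    refine ⟨C (a j)⁻¹ * X v, ?_⟩
    show φ _ = _
    rw [map_mul]
    have h1 : φ (C (a j)⁻¹) = Polynomial.C (a j)⁻¹ := by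
      rw [hφ]; rw [aeval_C, Polynomial.algebraMap_eq]
    have h2 : φ (X v) = Polynomial.C (coefAt v) * Polynomial.X := by
      rw [hφ]; rw [aeval_X]
    rw [h1, h2, hv, ← mul_assoc, ← Polynomial.C_mul, inv_mul_cancel₀ hj, map_one, one_mul]
  have hsurj : Function.Surjective φ := by
    rw [← AlgHom.range_eq_top]
    rw [eq_top_iff, ← Polynomial.adjoin_X]
    exact Algebra.adjoin_le (Set.singleton_subset_iff.2 hX)
  -- descend to the quotient
  set ψ := Ideal.Quotient.liftₐ _ φ hkill with hψ
  have hψsurj : Function.Surjective ψ := by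
    intro y
    obtain ⟨x, hx⟩ := hsurj y
    exact ⟨Ideal.Quotient.mk _ x, by rw [hψ]; exact hx⟩
  have : Module.Finite F (Polynomial F) :=
    Module.Finite.of_surjective (ψ.toLinearMap) hψsurj
  exact Polynomial.not_finite this

/-- the coefficient vector of a polynomial at the four distinguished vertices -/
private noncomputable def cfv (s t w u : V) : MvPolynomial V F →ₗ[F] (Fin 4 → F) where
  toFun g := ![coeff (Finsupp.single s 1) g, coeff (Finsupp.single t 1) g,
    coeff (Finsupp.single w 1) g, coeff (Finsupp.single u 1) g]
  map_add' := by intros; funext j; fin_cases j <;> simp [coeff_add]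
  map_smul' := by intros; funext j; fin_cases j <;> simp [coeff_smul]

@[simp] private lemma cfv_0 (s t w u : V) (g : MvPolynomial V F) :
    cfv s t w u g 0 = coeff (Finsupp.single s 1) g := rfl
@[simp] private lemma cfv_1 (s t w u : V) (g : MvPolynomial V F) :
    cfv s t w u g 1 = coeff (Finsupp.single t 1) g := rfl
@[simp] private lemma cfv_2 (s t w u : V) (g : MvPolynomial V F) :
    cfv s t w u g 2 = coeff (Finsupp.single w 1) g := rfl
@[simp] private lemma cfv_3 (s t w u : V) (g : MvPolynomial V F) :
    cfv s t w u g 3 = coeff (Finsupp.single u 1) g := rfl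

/-- a homogeneous linear form with vanishing coefficients at s,t,w,u lies in the span
of the outside variables -/
private lemma bridge (s t w u : V) {q : MvPolynomial V F}
    (hq : q ∈ homogeneousSubmodule V F 1) (hc : cfv s t w u q = 0) :
    q ∈ Ideal.span {p | ∃ v, v ∉ ({s, t, w, u} : Finset V) ∧ p = (X v : MvPolynomial V F)} := by
  rw [hom1_eq_sum hq]
  apply Ideal.sum_mem
  intro v _
  by_cases hv : v ∈ ({s, t, w, u} : Finset V)
  · have h0 : coeff (Finsupp.single v 1) q = 0 := by
      simp only [Finset.mem_insert, Finset.mem_singleton] at hv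
      rcases hv with rfl | rfl | rfl | rfl
      · exact (congrFun hc 0)
      · exact (congrFun hc 1)
      · exact (congrFun hc 2)
      · exact (congrFun hc 3)
    rw [h0, map_zero, zero_mul]
    exact Ideal.zero_mem _
  · exact Ideal.mul_mem_left _ _ (Ideal.subset_span ⟨v, hv, rfl⟩)

private lemma caseB' (s t u w : V)
    (Sg : Set (Finset V))
    (hSg : Sg = {τ | τ ⊆ ({s, w, u} : Finset V) ∨ τ ⊆ ({t, w, u} : Finset V)})
    (θ : Fin 3 → MvPolynomial V F) (hθ1 : ∀ i, θ i ∈ homogeneousSubmodule V F 1)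
    (ω : MvPolynomial V F) (hω : ω ∈ homogeneousSubmodule V F 1)
    (hwSg : ω ∉ stanleyReisnerIdeal F Sg ⊔ Ideal.span (Set.range θ))
    (hB : ¬ ∃ a : Fin 4 → F, a ≠ 0 ∧ a 0 = 0 ∧ ∀ i,
      coeff (Finsupp.single s 1) (θ i) * a 0 + coeff (Finsupp.single t 1) (θ i) * a 1
        + coeff (Finsupp.single w 1) (θ i) * a 2 + coeff (Finsupp.single u 1) (θ i) * a 3 = 0) :
    ∀ g ∈ homogeneousSubmodule V F 1,
      g ∈ Ideal.span (Set.range θ ∪ ({ω} ∪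
        {p | ∃ v, v ∉ ({s, t, w, u} : Finset V) ∧ p = (X v : MvPolynomial V F)})) := by
  classical
  -- the outside span sits inside the Stanley-Reisner ideal of Sg
  have hOSg : Ideal.span {p | ∃ v, v ∉ ({s, t, w, u} : Finset V) ∧ p = (X v : MvPolynomial V F)}
      ≤ stanleyReisnerIdeal F Sg := by
    rw [Ideal.span_le]
    rintro p ⟨v, hv, rfl⟩
    simp only [Finset.mem_insert, Finset.mem_singleton, not_or] at hv
    apply Ideal.subset_span
    refine ⟨{v}, Finset.singleton_nonempty v, ?_, by rw [Finset.prod_singleton]⟩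
    rw [hSg]
    rintro (h | h) <;> [skip; skip] <;>
      · have := h (Finset.mem_singleton_self v)
        simp only [Finset.mem_insert, Finset.mem_singleton] at this
        tauto
  -- the matrix of the three theta-functionals together with evaluation at coordinate 0
  set mat : Matrix (Fin 4) (Fin 4) F :=
    ![cfv s t w u (θ 0), cfv s t w u (θ 1), cfv s t w u (θ 2), Pi.single 0 1] with hmat
  have hrow : ∀ (a : Fin 4 → F) (i : Fin 3) (j : Fin 4), (j : ℕ) = (i : ℕ) →
      Matrix.mulVec mat a j
        = coeff (Finsupp.single s 1) (θ i) * a 0 + coeff (Finsupp.single t 1) (θ i) * a 1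
          + coeff (Finsupp.single w 1) (θ i) * a 2 + coeff (Finsupp.single u 1) (θ i) * a 3 := by
    intro a i j hij
    fin_cases i <;> fin_cases j <;>
      first
        | exact absurd hij (by decide)
        | simp [hmat, Matrix.mulVec, dotProduct, Fin.sum_univ_four,
            Matrix.cons_val_zero, Matrix.cons_val_one, Matrix.head_cons]
  have hrow3 : ∀ a : Fin 4 → F, Matrix.mulVec mat a 3 = a 0 := by
    intro a
    simp [hmat, Matrix.mulVec, dotProduct, Fin.sum_univ_four, Pi.single_apply]
  have hker : ∀ a, Matrix.mulVec mat a = 0 → a = 0 := by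
    intro a haa
    by_contra hane
    apply hB
    refine ⟨a, hane, by rw [← hrow3 a, haa]; rfl, fun i => ?_⟩
    rw [← hrow a i i.castSucc (by simp), haa]; rfl
  have hinj : Function.Injective (Matrix.mulVecLin mat) := by
    rw [← LinearMap.ker_eq_bot]
    rw [Submodule.eq_bot_iff]
    intro a ha
    exact hker a ha
  have hsurj : Function.Surjective (Matrix.mulVecLin mat) :=
    (LinearMap.injective_iff_surjective).1 hinj
  -- the four vectors
  set b : Fin 4 → (Fin 4 → F) :=
    ![cfv s t w u (θ 0), cfv s t w u (θ 1), cfv s t w u (θ 2), cfv s t w u ω] with hb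
  have hli : LinearIndependent F b := by
    rw [Fintype.linearIndependent_iff]
    intro d hd
    rw [Fin.sum_univ_four] at hd
    by_cases hd3 : d 3 = 0
    · have key3 : ∀ j : Fin 4, j ≠ 3 → d j = 0 := by
        intro j hj
        obtain ⟨a, ha⟩ := hsurj (Pi.single j 1)
        have hbj : ∀ k : Fin 4, k ≠ 3 → dotProduct (b k) a = Matrix.mulVec mat a k := by
          intro k hk
          fin_cases k <;> first | rfl | exact absurd rfl hk
        have hdot := congrArg (fun x => dotProduct x a) hd
        simp only [add_dotProduct, smul_dotProduct, smul_eq_mul,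
          zero_dotProduct] at hdot
        rw [hd3, zero_mul, add_zero] at hdot
        have ha' : mat.mulVec a = Pi.single j 1 := by rw [← Matrix.mulVecLin_apply, ha]
        rw [hbj (0 : Fin 4) (by decide), hbj (1 : Fin 4) (by decide),
          hbj (2 : Fin 4) (by decide), ha'] at hdot
        fin_cases j <;> simp [Pi.single_apply] at hdot <;>
          first
            | simpa using hdot
            | exact absurd rfl hj
      intro i
      by_cases hi : i = 3
      · rw [hi]; exact hd3
      · exact key3 i hi
    · -- then omega is a combination of the thetas modulo outside variables
      exfalso
      apply hwSg
      set q : MvPolynomial V F :=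
        C (d 0) * θ 0 + C (d 1) * θ 1 + C (d 2) * θ 2 + C (d 3) * ω with hq
      have e0 : (C (d 0) * θ 0 : MvPolynomial V F) = d 0 • θ 0 := C_mul'
      have e1 : (C (d 1) * θ 1 : MvPolynomial V F) = d 1 • θ 1 := C_mul'
      have e2 : (C (d 2) * θ 2 : MvPolynomial V F) = d 2 • θ 2 := C_mul'
      have e3 : (C (d 3) * ω : MvPolynomial V F) = d 3 • ω := C_mul'
      have hqhom : q ∈ homogeneousSubmodule V F 1 := by
        rw [hq, e0, e1, e2, e3]
        exact add_mem (add_mem (add_mem (Submodule.smul_mem _ _ (hθ1 0))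
          (Submodule.smul_mem _ _ (hθ1 1))) (Submodule.smul_mem _ _ (hθ1 2)))
          (Submodule.smul_mem _ _ hω)
      have hcq : cfv s t w u q = 0 := by
        rw [hq, e0, e1, e2, e3, map_add, map_add, map_add,
          map_smul, map_smul, map_smul, map_smul]
        funext j
        have hdj := congrFun hd j
        simp only [Pi.add_apply, Pi.smul_apply, smul_eq_mul, Pi.zero_apply] at hdj ⊢
        have hb0 : b 0 = cfv s t w u (θ 0) := rfl
        have hb1 : b 1 = cfv s t w u (θ 1) := rfl
        have hb2 : b 2 = cfv s t w u (θ 2) := rfl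
        have hb3 : b 3 = cfv s t w u ω := rfl
        rw [hb0, hb1, hb2, hb3] at hdj
        exact hdj
      have hqmem : q ∈ stanleyReisnerIdeal F Sg ⊔ Ideal.span (Set.range θ) :=
        Submodule.mem_sup_left (hOSg (bridge s t w u hqhom hcq))
      have hωeq : ω = C (d 3)⁻¹ * (q - (C (d 0) * θ 0 + C (d 1) * θ 1 + C (d 2) * θ 2)) := by
        rw [hq]
        rw [add_sub_cancel_left, ← mul_assoc, ← C_mul, inv_mul_cancel₀ hd3, C_1, one_mul]
      rw [hωeq]
      apply Ideal.mul_mem_left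
      apply sub_mem hqmem
      apply Submodule.mem_sup_right
      exact add_mem (add_mem
        (Ideal.mul_mem_left _ _ (Ideal.subset_span ⟨0, rfl⟩))
        (Ideal.mul_mem_left _ _ (Ideal.subset_span ⟨1, rfl⟩)))
        (Ideal.mul_mem_left _ _ (Ideal.subset_span ⟨2, rfl⟩))
  -- span of b is everything
  have hspan : Submodule.span F (Set.range b) = ⊤ := by
    apply Submodule.eq_top_of_finrank_eq
    rw [finrank_span_eq_card hli]
    simp [Module.finrank_fintype_fun_eq_card]
  -- main conclusion
  intro g hg
  have hmem : cfv s t w u g ∈ Submodule.span F (Set.range b) := by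
    rw [hspan]; trivial
  obtain ⟨e, he⟩ := (Submodule.mem_span_range_iff_exists_fun (R := F)).1 hmem
  set q : MvPolynomial V F :=
    g - (C (e 0) * θ 0 + C (e 1) * θ 1 + C (e 2) * θ 2 + C (e 3) * ω) with hq
  have hqhom : q ∈ homogeneousSubmodule V F 1 := by
    rw [hq]
    apply sub_mem hg
    apply add_mem (add_mem (add_mem _ _) _) _ <;>
      · rw [C_mul']
        first
          | exact Submodule.smul_mem _ _ (hθ1 _)
          | exact Submodule.smul_mem _ _ hω
  have hcq : cfv s t w u q = 0 := by
    rw [Fin.sum_univ_four] at he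
    rw [hq]
    have e0 : (C (e 0) * θ 0 : MvPolynomial V F) = e 0 • θ 0 := C_mul'
    have e1 : (C (e 1) * θ 1 : MvPolynomial V F) = e 1 • θ 1 := C_mul'
    have e2 : (C (e 2) * θ 2 : MvPolynomial V F) = e 2 • θ 2 := C_mul'
    have e3 : (C (e 3) * ω : MvPolynomial V F) = e 3 • ω := C_mul'
    rw [map_sub, map_add, map_add, map_add, e0, e1, e2, e3,
      map_smul, map_smul, map_smul, map_smul]
    rw [← he]
    funext j
    simp [hb]
  have hqmem := bridge s t w u hqhom hcq
  have hgeq : g = q + (C (e 0) * θ 0 + C (e 1) * θ 1 + C (e 2) * θ 2 + C (e 3) * ω) := by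
    rw [hq]; ring
  rw [hgeq]
  apply Submodule.add_mem
  · exact Ideal.span_mono (le_trans Set.subset_union_right Set.subset_union_right
      : {p | ∃ v, v ∉ ({s, t, w, u} : Finset V) ∧ p = (X v : MvPolynomial V F)} ⊆ _) hqmem
  · apply Submodule.add_mem
    apply Submodule.add_mem
    apply Submodule.add_mem
    · exact Ideal.mul_mem_left _ _ (Ideal.subset_span (Or.inl ⟨0, rfl⟩))
    · exact Ideal.mul_mem_left _ _ (Ideal.subset_span (Or.inl ⟨1, rfl⟩))
    · exact Ideal.mul_mem_left _ _ (Ideal.subset_span (Or.inl ⟨2, rfl⟩))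
    · exact Ideal.mul_mem_left _ _ (Ideal.subset_span (Or.inr (Set.mem_union_left _ rfl)))

end Helpers

/-- Lemma 3.5: gluing two triangles `{s,w,u}, {t,w,u}` along the edges
`{s,w}, {t,w}` of `Δ` at a new vertex `u`. If the degree-2 part of `F[Δ]/(Θ,ω)`
vanishes and `ω` is nonzero in `F[Σ]/ΘF[Σ]`, then the degree-2 part of `F[Γ]/(Θ,ω)`
vanishes. -/
theorem stmt6 {V F : Type*} [Fintype V] [DecidableEq V] [Field F]
    (Δ : Set (Finset V)) (hΔ : IsSimpComplex Δ)
    (s t u w : V) (hst : s ≠ t) (hsw : s ≠ w) (htw : t ≠ w)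
    (hes : ({s, w} : Finset V) ∈ Δ) (het : ({t, w} : Finset V) ∈ Δ)
    (hu : ∀ σ ∈ Δ, u ∉ σ)
    (Sg Γ : Set (Finset V))
    (hSg : Sg = {τ | τ ⊆ ({s, w, u} : Finset V) ∨ τ ⊆ ({t, w, u} : Finset V)})
    (hΓ : Γ = Δ ∪ Sg)
    (θ : Fin 3 → MvPolynomial V F) (hθ : IsLSOP F Γ θ)
    (ω : MvPolynomial V F) (hω : ω ∈ homogeneousSubmodule V F 1)
    (hvanΔ : ∀ p ∈ homogeneousSubmodule V F 2,
      p ∈ stanleyReisnerIdeal F Δ ⊔ (Ideal.span (Set.range θ) ⊔ Ideal.span {ω}))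
    (hwSg : ω ∉ stanleyReisnerIdeal F Sg ⊔ Ideal.span (Set.range θ)) :
    ∀ p ∈ homogeneousSubmodule V F 2,
      p ∈ stanleyReisnerIdeal F Γ ⊔ (Ideal.span (Set.range θ) ⊔ Ideal.span {ω}) := by
  classical
  obtain ⟨hθ1, hθfin⟩ := hθ
  have hus : u ≠ s := fun h => hu _ hes (h ▸ Finset.mem_insert_self s {w})
  have hut : u ≠ t := fun h => hu _ het (h ▸ Finset.mem_insert_self t {w})
  have huw : u ≠ w := fun h => hu _ hes (h ▸ by simp)
  set K := stanleyReisnerIdeal F Γ ⊔ (Ideal.span (Set.range θ) ⊔ Ideal.span {ω}) with hK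
  -- Step 1 : X u * X v ∈ K for every vertex v
  have hXuXv : ∀ v : V, (X u * X v : MvPolynomial V F) ∈ K := by
    have hout : ∀ v, v ∉ ({s, t, w, u} : Finset V) →
        (X u * X v : MvPolynomial V F) ∈ stanleyReisnerIdeal F Γ := by
      intro v hv
      simp only [Finset.mem_insert, Finset.mem_singleton, not_or] at hv
      apply Ideal.subset_span
      refine ⟨{u, v}, ⟨u, Finset.mem_insert_self u {v}⟩, ?_, ?_⟩
      · rw [hΓ]
        rintro (h | h)
        · exact hu _ h (Finset.mem_insert_self u {v})
        · rw [hSg] at h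
          rcases h with h | h <;>
          · have := h (Finset.mem_insert_of_mem (Finset.mem_singleton_self v))
            simp only [Finset.mem_insert, Finset.mem_singleton] at this
            tauto
      · rw [Finset.prod_pair (fun h => hv.2.2.2 h.symm)]
    by_cases hA : ∃ a : Fin 4 → F, a ≠ 0 ∧ a 0 = 0 ∧ ∀ i,
        coeff (Finsupp.single s 1) (θ i) * a 0 + coeff (Finsupp.single t 1) (θ i) * a 1
          + coeff (Finsupp.single w 1) (θ i) * a 2 + coeff (Finsupp.single u 1) (θ i) * a 3 = 0
    · obtain ⟨a, h1, h2, h3⟩ := hA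
      exact (caseA' Δ s t u w hst hsw htw hus hut huw hu Sg Γ hSg hΓ θ hθ1 hθfin a h1 h2 h3).elim
    · have hM := caseB' s t u w Sg hSg θ hθ1 ω hω hwSg hA
      have hgen : ∀ x, x ∈ Ideal.span (Set.range θ ∪ ({ω} ∪
          {p | ∃ v, v ∉ ({s, t, w, u} : Finset V) ∧ p = (X v : MvPolynomial V F)})) →
          (X u * x : MvPolynomial V F) ∈ K := by
        intro x hXv
        induction hXv using Submodule.span_induction with
        | mem g hg =>
          rcases hg with ⟨i, rfl⟩ | rfl | ⟨v', hv', rfl⟩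
          · exact Submodule.mem_sup_right (Submodule.mem_sup_left
              (Ideal.mul_mem_left _ _ (Ideal.subset_span ⟨i, rfl⟩)))
          · exact Submodule.mem_sup_right (Submodule.mem_sup_right
              (Ideal.mul_mem_left _ _ (Ideal.subset_span rfl)))
          · exact Submodule.mem_sup_left (hout v' hv')
        | zero => rw [mul_zero]; exact zero_mem _
        | add x y _ _ hx hy => rw [mul_add]; exact add_mem hx hy
        | smul r x _ hx => rw [smul_eq_mul, mul_left_comm]; exact Ideal.mul_mem_left _ _ hx
      intro v
      exact hgen (X v) (hM (X v) (by rw [mem_homogeneousSubmodule]; exact isHomogeneous_X _ _))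
  -- Step 2 : X u * q ∈ K for every linear form q
  have hXuq : ∀ q ∈ homogeneousSubmodule V F 1, (X u * q : MvPolynomial V F) ∈ K := by
    intro q hq
    rw [hom1_eq_sum hq, Finset.mul_sum]
    apply Ideal.sum_mem
    intro v _
    rw [mul_left_comm]
    exact Ideal.mul_mem_left _ _ (hXuXv v)
  -- Step 3 : K is generated by homogeneous elements, so it is closed under
  -- taking homogeneous components
  have hcomp : ∀ k ∈ K, homogeneousComponent 2 k ∈ K := by
    have hKspan : K = Ideal.span
        ({m | ∃ σ : Finset V, σ.Nonempty ∧ σ ∉ Γ ∧ m = ∏ v ∈ σ, X v}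
          ∪ (Set.range θ ∪ {ω})) := by
      rw [hK, stanleyReisnerIdeal, Ideal.span_union, Ideal.span_union]
    intro k hk
    rw [hKspan] at hk ⊢
    apply hc_mem_span _ hk
    rintro g (⟨σ, _, _, rfl⟩ | ⟨i, rfl⟩ | rfl)
    · refine ⟨∑ _v ∈ σ, 1, ?_⟩
      rw [mem_homogeneousSubmodule]
      exact MvPolynomial.IsHomogeneous.prod σ _ _ (fun v _ => isHomogeneous_X _ _)
    · exact ⟨1, hθ1 i⟩
    · exact ⟨1, hω⟩
  -- Step 4 : the Stanley–Reisner ideal of Δ is contained in that of Γ plus (X u)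
  have hIΔ : stanleyReisnerIdeal F Δ ≤ stanleyReisnerIdeal F Γ ⊔ Ideal.span {X u} := by
    rw [stanleyReisnerIdeal, Ideal.span_le]
    rintro m ⟨σ, hne, hσΔ, rfl⟩
    by_cases hσΓ : σ ∈ Γ
    · have huσ : u ∈ σ := by
        rw [hΓ] at hσΓ
        rcases hσΓ with h | h
        · exact absurd h hσΔ
        · rw [hSg] at h
          by_contra huσ
          rcases h with h | h
          · refine hσΔ (hΔ _ hes σ ?_)
            intro v hv
            have := h hv
            simp only [Finset.mem_insert, Finset.mem_singleton] at this ⊢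
            rcases this with rfl | rfl | rfl
            · exact Or.inl rfl
            · exact Or.inr rfl
            · exact absurd hv huσ
          · refine hσΔ (hΔ _ het σ ?_)
            intro v hv
            have := h hv
            simp only [Finset.mem_insert, Finset.mem_singleton] at this ⊢
            rcases this with rfl | rfl | rfl
            · exact Or.inl rfl
            · exact Or.inr rfl
            · exact absurd hv huσ
      apply Submodule.mem_sup_right
      rw [Ideal.mem_span_singleton]
      exact Finset.dvd_prod_of_mem _ huσ
    · exact Submodule.mem_sup_left (Ideal.subset_span ⟨σ, hne, hσΓ, rfl⟩)
  -- Step 5 : assemble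
  intro p hp
  have hp' : p ∈ K ⊔ Ideal.span {X u} := by
    have hle : stanleyReisnerIdeal F Δ ⊔ (Ideal.span (Set.range θ) ⊔ Ideal.span {ω})
        ≤ K ⊔ Ideal.span {X u} := by
      apply sup_le
      · exact hIΔ.trans (sup_le_sup_right le_sup_left _)
      · exact le_trans le_sup_right le_sup_left
    exact hle (hvanΔ p hp)
  obtain ⟨k, hk, m, hm, hpkm⟩ := Submodule.mem_sup.1 hp'
  obtain ⟨r, rfl⟩ := Ideal.mem_span_singleton.1 hm
  have hp2 : homogeneousComponent 2 p = p := by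
    rw [homogeneousComponent_of_mem hp, if_pos rfl]
  rw [← hp2, ← hpkm, map_add]
  apply add_mem (hcomp k hk)
  have hXur : (X u : MvPolynomial V F) * r
      = ∑ i ∈ Finset.range (r.totalDegree + 1), X u * homogeneousComponent i r := by
    rw [← Finset.mul_sum, sum_homogeneousComponent]
  rw [hXur, map_sum]
  apply Ideal.sum_mem
  intro i _
  have hmem : (X u : MvPolynomial V F) * homogeneousComponent i r
      ∈ homogeneousSubmodule V F (1 + i) := by
    rw [mem_homogeneousSubmodule]
    exact (isHomogeneous_X F u).mul (homogeneousComponent_isHomogeneous i r)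
  rw [homogeneousComponent_of_mem hmem]
  split_ifs with h
  · have hi : i = 1 := by omega
    subst hi
    exact hXuq _ (homogeneousComponent_mem 1 r)
  · exact zero_mem _
end

section
/- Call a finite graph G Laman-sparse if every subset W of its vertices with |W| ≥ 2 spans at most 2|W| − 3 edges, and call a vertex subset U Laman if it spans exactly 2|U| − 3 edges and the induced graph on U is Laman-sparse. If B_1 and B_2 are vertex subsets of a Laman-sparse graph G, each Laman, with |B_1 ∩ B_2| ≥ 2, then B_1 ∪ B_2 spans at least 2|B_1 ∪ B_2| − 3 edges; hence B_1 ∪ B_2 is Laman and every edge of G with both endpoints in B_1 ∪ B_2 has both endpoints in B_1 or both in B_2. -/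
/-- The set of edges of `G` spanned by the vertex set `W` (both endpoints in `W`). -/
noncomputable def spannedEdges {V : Type*} [Fintype V] [DecidableEq V]
    (G : SimpleGraph V) [DecidableRel G.Adj] (W : Finset V) : Finset (Sym2 V) :=
  @Finset.filter _ (fun e => ∀ v ∈ e, v ∈ W) (Classical.decPred _) G.edgeFinset

/-- `G` is Laman-sparse: every `W` with `|W| ≥ 2` spans at most `2|W| − 3` edges. -/
def LamanSparse {V : Type*} [Fintype V] [DecidableEq V]
    (G : SimpleGraph V) [DecidableRel G.Adj] : Prop :=
  ∀ W : Finset V, 2 ≤ W.card → (spannedEdges G W).card + 3 ≤ 2 * W.card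

/-- `U` is a Laman subset: it spans exactly `2|U| − 3` edges and the induced graph on
`U` is Laman-sparse. -/
def LamanSet {V : Type*} [Fintype V] [DecidableEq V]
    (G : SimpleGraph V) [DecidableRel G.Adj] (U : Finset V) : Prop :=
  (spannedEdges G U).card + 3 = 2 * U.card ∧
  ∀ W : Finset V, W ⊆ U → 2 ≤ W.card → (spannedEdges G W).card + 3 ≤ 2 * W.card

lemma mem_spannedEdges {V : Type*} [Fintype V] [DecidableEq V]
    (G : SimpleGraph V) [DecidableRel G.Adj] (W : Finset V) (e : Sym2 V) :
    e ∈ spannedEdges G W ↔ e ∈ G.edgeFinset ∧ ∀ v ∈ e, v ∈ W := by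
  simp [spannedEdges, Finset.mem_filter]

lemma spannedEdges_mono {V : Type*} [Fintype V] [DecidableEq V]
    (G : SimpleGraph V) [DecidableRel G.Adj] {W W' : Finset V} (h : W ⊆ W') :
    spannedEdges G W ⊆ spannedEdges G W' := by
  intro e he
  rw [mem_spannedEdges] at he ⊢
  exact ⟨he.1, fun v hv => h (he.2 v hv)⟩

/-- in a Laman-sparse graph, the union of two Laman subsets meeting in
at least 2 vertices spans at least `2|B₁ ∪ B₂| − 3` edges; hence it is Laman and each
spanned edge is spanned by `B₁` or by `B₂`. -/
theorem stmt14 {V : Type*} [Fintype V] [DecidableEq V]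
    (G : SimpleGraph V) [DecidableRel G.Adj] (hG : LamanSparse G)
    (B₁ B₂ : Finset V) (h₁ : LamanSet G B₁) (h₂ : LamanSet G B₂)
    (hmeet : 2 ≤ (B₁ ∩ B₂).card) :
    2 * (B₁ ∪ B₂).card ≤ (spannedEdges G (B₁ ∪ B₂)).card + 3 ∧
    LamanSet G (B₁ ∪ B₂) ∧
    ∀ e ∈ spannedEdges G (B₁ ∪ B₂), e ∈ spannedEdges G B₁ ∨ e ∈ spannedEdges G B₂ := by
  have hB : (B₁ ∪ B₂).card + (B₁ ∩ B₂).card = B₁.card + B₂.card :=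
    Finset.card_union_add_card_inter B₁ B₂
  have hE : (spannedEdges G B₁ ∪ spannedEdges G B₂).card
      + (spannedEdges G B₁ ∩ spannedEdges G B₂).card
      = (spannedEdges G B₁).card + (spannedEdges G B₂).card :=
    Finset.card_union_add_card_inter _ _
  have hIsub : spannedEdges G B₁ ∩ spannedEdges G B₂ ⊆ spannedEdges G (B₁ ∩ B₂) := by
    intro e he
    rw [Finset.mem_inter, mem_spannedEdges, mem_spannedEdges] at he
    rw [mem_spannedEdges]
    exact ⟨he.1.1, fun v hv => Finset.mem_inter.2 ⟨he.1.2 v hv, he.2.2 v hv⟩⟩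
  have hIle : (spannedEdges G B₁ ∩ spannedEdges G B₂).card
      ≤ (spannedEdges G (B₁ ∩ B₂)).card := Finset.card_le_card hIsub
  have hGI := hG (B₁ ∩ B₂) hmeet
  have hUsub : spannedEdges G B₁ ∪ spannedEdges G B₂ ⊆ spannedEdges G (B₁ ∪ B₂) := by
    apply Finset.union_subset
    · exact spannedEdges_mono G Finset.subset_union_left
    · exact spannedEdges_mono G Finset.subset_union_right
  have hUle : (spannedEdges G B₁ ∪ spannedEdges G B₂).card
      ≤ (spannedEdges G (B₁ ∪ B₂)).card := Finset.card_le_card hUsub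
  have hcardU : 2 ≤ (B₁ ∪ B₂).card :=
    le_trans hmeet (Finset.card_le_card (Finset.inter_subset_union))
  have hGU := hG (B₁ ∪ B₂) hcardU
  have he₁ := h₁.1
  have he₂ := h₂.1
  have key : 2 * (B₁ ∪ B₂).card ≤ (spannedEdges G (B₁ ∪ B₂)).card + 3 := by omega
  refine ⟨key, ⟨by omega, fun W hW h2 => hG W h2⟩, ?_⟩
  have hcards : (spannedEdges G (B₁ ∪ B₂)).card
      ≤ (spannedEdges G B₁ ∪ spannedEdges G B₂).card := by omega
  have heq := Finset.eq_of_subset_of_card_le hUsub hcards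
  intro e he
  rw [← heq, Finset.mem_union] at he
  exact he
end

section
/- Let Δ = Γ_1 #_σ Γ_2 be the connected sum of two simplicial 2-spheres along a common facet σ, let Θ = θ_1,θ_2,θ_3 be a common linear system of parameters for F[Δ] and F[⟨σ⟩], and let ω be a linear form. If (F[Γ_i]/(Θ,ω))_2 = 0 for i = 1, 2, then (F[Δ]/(Θ,ω))_2 = 0. -/
open MvPolynomial

set_option linter.unusedSectionVars false
set_option maxHeartbeats 1000000

namespace BN
attribute [local instance] MvPolynomial.gradedAlgebra
variable {V F : Type*} [Fintype V] [DecidableEq V] [Field F]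

lemma deg_one_single (m : V →₀ ℕ) (h : Finsupp.degree m = 1) :
    ∃ v, m = Finsupp.single v 1 := by
  classical
  have hne : m ≠ 0 := by rintro rfl; simp [map_zero] at h
  obtain ⟨v, hv⟩ := Finsupp.support_nonempty_iff.mpr hne
  have hv1 : 1 ≤ m v := Nat.one_le_iff_ne_zero.mpr (Finsupp.mem_support_iff.mp hv)
  have hsplit : m v + ∑ x ∈ m.support.erase v, m x = ∑ x ∈ m.support, m x :=
    Finset.add_sum_erase _ _ hv
  rw [Finsupp.degree_apply] at h
  have hmv : m v = 1 := by omega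
  have hrest : ∑ x ∈ m.support.erase v, m x = 0 := by omega
  refine ⟨v, ?_⟩
  ext w
  rcases eq_or_ne w v with rfl | hwv
  · simpa [Finsupp.single_apply] using hmv
  · rw [Finsupp.single_apply, if_neg (fun hh => hwv hh.symm)]
    by_contra hw0
    have hw : w ∈ m.support.erase v :=
      Finset.mem_erase.mpr ⟨hwv, Finsupp.mem_support_iff.mpr hw0⟩
    have := Finset.sum_eq_zero_iff.mp hrest w hw
    exact hw0 this

lemma lin_expand (ℓ : MvPolynomial V F) (hl : ℓ ∈ homogeneousSubmodule V F 1) :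
    ℓ = ∑ v : V, C (coeff (Finsupp.single v 1) ℓ) * X v := by
  rw [mem_homogeneousSubmodule] at hl
  apply MvPolynomial.ext
  intro m
  rw [coeff_sum]
  simp only [coeff_C_mul, coeff_X']
  by_cases hm : Finsupp.degree m = 1
  · obtain ⟨v, rfl⟩ := deg_one_single m hm
    rw [Finset.sum_eq_single v]
    · simp
    · intro w _ hwv
      rw [if_neg, mul_zero]
      intro hh
      exact hwv (by simpa using (Finsupp.single_left_inj one_ne_zero).mp hh)
    · intro h; exact absurd (Finset.mem_univ v) h
  · have h0 : coeff m ℓ = 0 := by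
      by_contra hc
      exact hm (by simpa [Finsupp.degree_apply, Finsupp.weight, Finsupp.linearCombination, Finsupp.sum] using hl hc)
    rw [h0]
    refine (Finset.sum_eq_zero fun v _ => ?_).symm
    rw [if_neg, mul_zero]
    rintro rfl
    apply hm
    rw [Finsupp.degree_apply, Finsupp.support_single_ne_zero _ one_ne_zero, Finset.sum_singleton]
    exact Finsupp.single_eq_same


lemma prod_X_eq_monomial' (τ : Finset V) :
    (∏ v ∈ τ, (X v : MvPolynomial V F)) =
      monomial (∑ v ∈ τ, Finsupp.single v 1) 1 := by
  classical
  induction τ using Finset.induction_on with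
  | empty => simp [monomial_zero']
  | insert _ _ h ih =>
      rw [Finset.prod_insert h, ih, Finset.sum_insert h, X, monomial_mul, one_mul]

/-- the "divisibility" description of membership in a Stanley–Reisner ideal -/
lemma mem_SR_iff (Γ : Set (Finset V)) (p : MvPolynomial V F) :
    p ∈ stanleyReisnerIdeal F Γ ↔
      ∀ m ∈ p.support, ∃ τ : Finset V, τ.Nonempty ∧ τ ∉ Γ ∧ ∀ v ∈ τ, m v ≠ 0 := by
  classical
  constructor
  · intro hp
    refine Submodule.span_induction ?_ ?_ ?_ ?_ hp
    · rintro x ⟨τ, hne, hτ, rfl⟩ m hm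
      rw [prod_X_eq_monomial'] at hm
      rw [support_monomial] at hm
      simp only [one_ne_zero, if_false] at hm
      rw [Finset.mem_singleton] at hm
      subst hm
      refine ⟨τ, hne, hτ, fun v hv => ?_⟩
      have : (∑ w ∈ τ, Finsupp.single w (1:ℕ)) v = 1 := by
        rw [Finset.sum_apply']
        rw [Finset.sum_eq_single v]
        · simp
        · intro w _ hwv; simp [Finsupp.single_apply, hwv]
        · intro h; exact absurd hv h
      omega
    · intro m hm; simp at hm
    · intro x y _ _ hx hy m hm
      rcases Finset.mem_union.mp (MvPolynomial.support_add hm) with h | h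
      · exact hx m h
      · exact hy m h
    · intro r x _ hx m hm
      rw [smul_eq_mul] at hm
      obtain ⟨m₁, hm₁, m₂, hm₂, rfl⟩ :=
        Finset.mem_add.mp (MvPolynomial.support_mul r x hm)
      obtain ⟨τ, hne, hτ, hall⟩ := hx m₂ hm₂
      refine ⟨τ, hne, hτ, fun v hv => ?_⟩
      have := hall v hv
      simp only [Finsupp.add_apply]
      omega
  · intro h
    rw [MvPolynomial.as_sum p]
    refine Ideal.sum_mem _ fun m hm => ?_
    obtain ⟨τ, hne, hτ, hall⟩ := h m hm
    have hgen : (∏ v ∈ τ, (X v : MvPolynomial V F)) ∈ stanleyReisnerIdeal F Γ :=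
      Ideal.subset_span ⟨τ, hne, hτ, rfl⟩
    have hle : (∑ v ∈ τ, Finsupp.single v (1:ℕ)) ≤ m := by
      rw [Finsupp.le_def]
      intro v
      rw [Finset.sum_apply']
      by_cases hv : v ∈ τ
      · rw [Finset.sum_eq_single v]
        · have := hall v hv; simp; omega
        · intro w _ hwv; simp [Finsupp.single_apply, hwv]
        · intro hh; exact absurd hv hh
      · rw [Finset.sum_eq_zero]
        · exact Nat.zero_le _
        · intro w hw
          have : w ≠ v := fun e => hv (e ▸ hw)
          simp [Finsupp.single_apply, this]
    have key : monomial m (coeff m p) =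
        (∏ v ∈ τ, (X v : MvPolynomial V F)) *
          monomial (m - ∑ v ∈ τ, Finsupp.single v 1) (coeff m p) := by
      rw [prod_X_eq_monomial', monomial_mul, one_mul,
        add_tsub_cancel_of_le hle]
    rw [key]
    exact Ideal.mul_mem_right _ _ hgen

lemma SR_isHomogeneous (Γ : Set (Finset V)) :
    (stanleyReisnerIdeal F Γ).IsHomogeneous (homogeneousSubmodule V F) := by
  apply Ideal.homogeneous_span
  rintro x ⟨τ, hne, hτ, rfl⟩
  refine ⟨τ.card, ?_⟩
  rw [mem_homogeneousSubmodule]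
  have := MvPolynomial.IsHomogeneous.prod τ (fun v => (X v : MvPolynomial V F))
    (fun _ => 1) (fun v _ => isHomogeneous_X F v)
  simpa using this

lemma K_isHomogeneous (θ : Fin 3 → MvPolynomial V F)
    (hθ : ∀ i, θ i ∈ homogeneousSubmodule V F 1)
    (ω : MvPolynomial V F) (hω : ω ∈ homogeneousSubmodule V F 1) :
    (Ideal.span (Set.range θ) ⊔ Ideal.span {ω}).IsHomogeneous
      (homogeneousSubmodule V F) := by
  refine Ideal.IsHomogeneous.sup ?_ ?_
  · exact Ideal.homogeneous_span _ _ (by rintro x ⟨i, rfl⟩; exact ⟨1, hθ i⟩)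
  · exact Ideal.homogeneous_span _ _
      (by rintro x hx; rw [Set.mem_singleton_iff] at hx; exact ⟨1, hx ▸ hω⟩)

lemma extract (Γ : Set (Finset V)) (θ : Fin 3 → MvPolynomial V F)
    (hθ : ∀ i, θ i ∈ homogeneousSubmodule V F 1) (ω : MvPolynomial V F)
    (hω : ω ∈ homogeneousSubmodule V F 1) (p : MvPolynomial V F)
    (hp : p ∈ homogeneousSubmodule V F 2)
    (hmem : p ∈ stanleyReisnerIdeal F Γ ⊔ (Ideal.span (Set.range θ) ⊔ Ideal.span {ω})) :
    ∃ (a : MvPolynomial V F) (g : Fin 3 → MvPolynomial V F) (G : MvPolynomial V F),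
      a ∈ stanleyReisnerIdeal F Γ ∧ (∀ i, g i ∈ homogeneousSubmodule V F 1) ∧
      G ∈ homogeneousSubmodule V F 1 ∧ p = a + (∑ i, θ i * g i + ω * G) := by
  classical
  obtain ⟨x, hx, y, hy, hpxy⟩ := Submodule.mem_sup.mp hmem
  obtain ⟨y₁, hy₁, y₂, hy₂, hyy⟩ := Submodule.mem_sup.mp hy
  obtain ⟨c, hc⟩ := Ideal.mem_span_range_iff_exists_fun.mp hy₁
  obtain ⟨r, hr⟩ := Ideal.mem_span_singleton'.mp hy₂
  set 𝒜 := homogeneousSubmodule V F with h𝒜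
  have hdec : ∀ z t : MvPolynomial V F, t ∈ 𝒜 1 →
      (DirectSum.decompose 𝒜 (z * t) 2 : MvPolynomial V F)
        = (DirectSum.decompose 𝒜 z 1 : MvPolynomial V F) * t := by
    intro z t ht
    have h2 : (2 : ℕ) = 1 + 1 := rfl
    rw [h2]
    exact DirectSum.coe_decompose_mul_add_of_right_mem 𝒜 ht
  have hpp : p = (DirectSum.decompose 𝒜 p 2 : MvPolynomial V F) :=
    (DirectSum.decompose_of_mem_same 𝒜 hp).symm
  refine ⟨(DirectSum.decompose 𝒜 x 2 : MvPolynomial V F),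
    fun i => (DirectSum.decompose 𝒜 (c i) 1 : MvPolynomial V F),
    (DirectSum.decompose 𝒜 r 1 : MvPolynomial V F),
    SR_isHomogeneous Γ 2 hx, fun i => SetLike.coe_mem _, SetLike.coe_mem _, ?_⟩
  calc p = (DirectSum.decompose 𝒜 p 2 : MvPolynomial V F) := hpp
    _ = (DirectSum.decompose 𝒜 x 2 : MvPolynomial V F)
        + (∑ i, (DirectSum.decompose 𝒜 (c i * θ i) 2 : MvPolynomial V F))
        + (DirectSum.decompose 𝒜 (r * ω) 2 : MvPolynomial V F) := by
        have hpeq : p = x + ((∑ i, c i * θ i) + r * ω) := by rw [hc, hr, hyy, hpxy]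
        rw [hpeq]
        simp only [DirectSum.decompose_add, DirectSum.add_apply, Submodule.coe_add,
          DirectSum.decompose_sum, DFinsupp.finset_sum_apply,
          AddSubmonoidClass.coe_finset_sum]
        have hs : ((∑ x : Fin 3, DirectSum.decompose 𝒜 (c x * θ x)) 2 : MvPolynomial V F)
            = ∑ x : Fin 3, ((DirectSum.decompose 𝒜 (c x * θ x)) 2 : MvPolynomial V F) := by
          rw [DFinsupp.finset_sum_apply]
          simp
        rw [hs]; ring
    _ = _ := by
        rw [add_assoc]
        congr 1
        congr 1
        · exact Finset.sum_congr rfl fun i _ => by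
            rw [hdec (c i) (θ i) (hθ i), mul_comm]
        · rw [hdec r ω hω, mul_comm]

lemma theta_span (σ : Finset V) (θ : Fin 3 → MvPolynomial V F)
    (hθ : ∀ i, θ i ∈ homogeneousSubmodule V F 1)
    (hfin : FiniteDimensional F (MvPolynomial V F ⧸
      (stanleyReisnerIdeal F {τ : Finset V | τ ⊆ σ} ⊔ Ideal.span (Set.range θ)))) :
    ⊤ ≤ Submodule.span F (Set.range fun i => fun v : {x // x ∈ σ} =>
      coeff (Finsupp.single (v : V) 1) (θ i)) := by
  classical
  by_contra hlt
  have hlt' : Submodule.span F (Set.range fun i => fun v : {x // x ∈ σ} =>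
      coeff (Finsupp.single (v : V) 1) (θ i)) < ⊤ := lt_top_iff_ne_top.mpr
    (fun h => hlt (le_of_eq h.symm))
  obtain ⟨f, hf0, hfmap⟩ := Submodule.exists_dual_map_eq_bot_of_lt_top hlt' inferInstance
  set d : {x // x ∈ σ} → F := fun v => f (Pi.single v 1) with hd
  have feval : ∀ x : {x // x ∈ σ} → F, f x = ∑ v, x v * d v := by
    intro x
    have hx : x = ∑ v, x v • (Pi.single v 1 : {x // x ∈ σ} → F) := by
      rw [← Finset.univ_sum_single x]
      exact Finset.sum_congr rfl fun v _ => by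
        funext w; simp [Pi.single_apply]
    conv_lhs => rw [hx]
    rw [map_sum]
    exact Finset.sum_congr rfl fun v _ => by rw [map_smul, smul_eq_mul]
  have hfker : ∀ i, f (fun v : {x // x ∈ σ} => coeff (Finsupp.single (v : V) 1) (θ i)) = 0 := by
    intro i
    have hmem : (fun v : {x // x ∈ σ} => coeff (Finsupp.single (v : V) 1) (θ i)) ∈
        Submodule.span F (Set.range fun i => fun v : {x // x ∈ σ} =>
          coeff (Finsupp.single (v : V) 1) (θ i)) :=
      Submodule.subset_span ⟨i, rfl⟩
    have := Submodule.mem_map_of_mem (f := f) hmem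
    rw [hfmap] at this
    exact (Submodule.mem_bot F).mp this
  -- the substitution map
  set dd : V → F := fun v => if h : v ∈ σ then d ⟨v, h⟩ else 0 with hdd
  set ψ : MvPolynomial V F →ₐ[F] Polynomial F :=
    aeval (fun v => Polynomial.C (dd v) * Polynomial.X) with hψ
  have hψX : ∀ v, ψ (X v) = Polynomial.C (dd v) * Polynomial.X := fun v => aeval_X _ v
  have hψθ : ∀ i, ψ (θ i) = 0 := by
    intro i
    conv_lhs => rw [lin_expand (θ i) (hθ i)]
    rw [map_sum]
    have : ∀ v : V, ψ (C (coeff (Finsupp.single v 1) (θ i)) * X v)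
        = Polynomial.C (coeff (Finsupp.single v 1) (θ i) * dd v) * Polynomial.X := by
      intro v
      rw [map_mul, hψX, algHom_C, Polynomial.algebraMap_eq, ← mul_assoc, ← Polynomial.C_mul]
    rw [Finset.sum_congr rfl fun v _ => this v, ← Finset.sum_mul,
      show (∑ v : V, Polynomial.C (coeff (Finsupp.single v 1) (θ i) * dd v))
        = Polynomial.C (∑ v : V, coeff (Finsupp.single v 1) (θ i) * dd v) from
        (map_sum Polynomial.C _ _).symm]
    have hzero : ∑ v : V, coeff (Finsupp.single v 1) (θ i) * dd v = 0 := by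
      rw [← Finset.sum_subset (Finset.subset_univ σ)
        (fun v _ hv => by simp [hdd, dif_neg hv])]
      rw [← Finset.sum_coe_sort σ (fun v => coeff (Finsupp.single (v:V) 1) (θ i) * dd v)]
      have := hfker i
      rw [feval] at this
      rw [← this]
      exact Finset.sum_congr rfl fun v _ => by
        simp [hdd]
    rw [hzero]
    simp
  have hψSR : ∀ a ∈ stanleyReisnerIdeal F {τ : Finset V | τ ⊆ σ}, ψ a = 0 := by
    intro a ha
    refine Submodule.span_induction ?_ (map_zero ψ) (fun x y _ _ hx hy => by
      rw [map_add, hx, hy, add_zero]) (fun r x _ hx => by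
      rw [smul_eq_mul, map_mul, hx, mul_zero]) ha
    rintro x ⟨τ, hne, hτ, rfl⟩
    simp only [Set.mem_setOf_eq] at hτ
    obtain ⟨w, hwτ, hwσ⟩ := Finset.not_subset.mp hτ
    rw [map_prod]
    refine Finset.prod_eq_zero hwτ ?_
    rw [hψX, hdd]
    simp [dif_neg hwσ]
  have hker : ∀ a ∈ (stanleyReisnerIdeal F {τ : Finset V | τ ⊆ σ} ⊔
      Ideal.span (Set.range θ)), ψ a = 0 := by
    intro a ha
    obtain ⟨x, hx, y, hy, rfl⟩ := Submodule.mem_sup.mp ha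
    rw [map_add, hψSR x hx, zero_add]
    obtain ⟨c, rfl⟩ := Ideal.mem_span_range_iff_exists_fun.mp hy
    rw [map_sum]
    exact Finset.sum_eq_zero fun i _ => by rw [map_mul, hψθ i, mul_zero]
  -- surjectivity of ψ
  obtain ⟨v₀, hv₀⟩ : ∃ v₀, d v₀ ≠ 0 := by
    by_contra h
    push_neg at h
    apply hf0
    apply LinearMap.ext
    intro x
    rw [feval]
    simp [h]
  have hXrange : Polynomial.X ∈ ψ.range := by
    refine ⟨(C ((dd (v₀ : V))⁻¹) : MvPolynomial V F) * X (v₀ : V), ?_⟩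
    have hddv : dd ↑v₀ = d v₀ := by simp [hdd]
    show ψ _ = _
    rw [map_mul, hψX, algHom_C, Polynomial.algebraMap_eq, ← mul_assoc, ← Polynomial.C_mul, hddv,
      inv_mul_cancel₀ hv₀]
    simp
  have hsurj : Function.Surjective ψ := by
    rw [← AlgHom.range_eq_top]
    rw [← top_le_iff, ← Polynomial.adjoin_X]
    exact Algebra.adjoin_le (Set.singleton_subset_iff.mpr hXrange)
  -- contradiction
  haveI := hfin
  set I := stanleyReisnerIdeal F {τ : Finset V | τ ⊆ σ} ⊔ Ideal.span (Set.range θ)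
  have hqsurj : Function.Surjective (Ideal.Quotient.liftₐ I ψ hker) := by
    intro z
    obtain ⟨a, rfl⟩ := hsurj z
    exact ⟨Ideal.Quotient.mk I a, rfl⟩
  have : Module.Finite F (Polynomial F) :=
    Module.Finite.of_surjective (Ideal.Quotient.liftₐ I ψ hker).toLinearMap hqsurj
  exact Polynomial.not_finite this

lemma SR_ker {B : Type*} [CommRing B] [Algebra F B] (σ : Finset V)
    (ψ : MvPolynomial V F →ₐ[F] B) (hX : ∀ w ∉ σ, ψ (X w) = 0) :
    ∀ a ∈ stanleyReisnerIdeal F {τ : Finset V | τ ⊆ σ}, ψ a = 0 := by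
  intro a ha
  refine Submodule.span_induction ?_ (map_zero ψ) (fun x y _ _ hx hy => by
    rw [map_add, hx, hy, add_zero]) (fun r x _ hx => by
    rw [smul_eq_mul, map_mul, hx, mul_zero]) ha
  rintro x ⟨τ, hne, hτ, rfl⟩
  simp only [Set.mem_setOf_eq] at hτ
  obtain ⟨w, hwτ, hwσ⟩ := Finset.not_subset.mp hτ
  rw [map_prod]
  exact Finset.prod_eq_zero hwτ (hX w hwσ)

lemma quad_zero (σ : Finset V) (hσ : σ.card = 3) (θ : Fin 3 → MvPolynomial V F)
    (hθ : ∀ i, θ i ∈ homogeneousSubmodule V F 1)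
    (hspan : ⊤ ≤ Submodule.span F (Set.range fun i => fun v : {x // x ∈ σ} =>
      coeff (Finsupp.single (v : V) 1) (θ i)))
    (q : Fin 3 → Fin 3 → F)
    (hQ : (∑ i, ∑ j, q i j • (θ i * θ j)) ∈
      stanleyReisnerIdeal F {τ : Finset V | τ ⊆ σ}) :
    (∑ i, ∑ j, q i j • (θ i * θ j)) = 0 := by
  classical
  set B : Fin 3 → ({x // x ∈ σ} → F) :=
    fun i => fun v => coeff (Finsupp.single (v : V) 1) (θ i) with hB
  have hcard : Fintype.card (Fin 3) = Module.finrank F ({x // x ∈ σ} → F) := by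
    rw [Module.finrank_fintype_fun_eq_card, Fintype.card_coe, hσ, Fintype.card_fin]
  let Bas : Module.Basis (Fin 3) F ({x // x ∈ σ} → F) :=
    basisOfTopLeSpanOfCardEqFinrank B hspan hcard
  have hBas : ⇑Bas = B := coe_basisOfTopLeSpanOfCardEqFinrank B hspan hcard
  set φ : ({x // x ∈ σ} → F) →ₗ[F] MvPolynomial (Fin 3) F :=
    Bas.constr F (fun i => X i) with hφ
  have hφB : ∀ i, φ (B i) = X i := by
    intro i
    rw [← hBas]
    exact Bas.constr_basis F _ i
  set S : MvPolynomial V F →ₐ[F] MvPolynomial (Fin 3) F :=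
    aeval (fun v => if h : v ∈ σ then φ (Pi.single ⟨v, h⟩ 1) else 0) with hS
  have hSX : ∀ v, S (X v) = if h : v ∈ σ then φ (Pi.single ⟨v, h⟩ 1) else 0 :=
    fun v => aeval_X _ v
  have hSθ : ∀ i, S (θ i) = X i := by
    intro i
    conv_lhs => rw [lin_expand (θ i) (hθ i)]
    rw [map_sum]
    have step : ∀ v : V, S (C (coeff (Finsupp.single v 1) (θ i)) * X v)
        = coeff (Finsupp.single v 1) (θ i) •
            (if h : v ∈ σ then φ (Pi.single ⟨v, h⟩ 1) else 0) := by
      intro v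
      rw [map_mul, hSX, algHom_C, MvPolynomial.algebraMap_eq, ← smul_eq_C_mul]
    rw [Finset.sum_congr rfl fun v _ => step v,
      ← Finset.sum_subset (Finset.subset_univ σ)
        (fun v _ hv => by rw [dif_neg hv, smul_zero]),
      ← Finset.sum_attach σ (fun v => coeff (Finsupp.single v 1) (θ i) •
        (if h : v ∈ σ then φ (Pi.single ⟨v, h⟩ 1) else 0))]
    have step2 : ∀ x : {v // v ∈ σ}, coeff (Finsupp.single (x:V) 1) (θ i) •
        (if h : (x:V) ∈ σ then φ (Pi.single ⟨(x:V), h⟩ 1) else 0)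
          = φ (B i x • (Pi.single x 1 : {v // v ∈ σ} → F)) := by
      intro x
      rw [dif_pos x.2, map_smul]
    rw [Finset.sum_congr rfl fun x _ => step2 x, ← map_sum, ← Finset.univ_eq_attach]
    have hsum : (∑ x : {v // v ∈ σ}, B i x • (Pi.single x 1 : {v // v ∈ σ} → F)) = B i := by
      rw [← Finset.univ_sum_single (B i)]
      exact Finset.sum_congr rfl fun x _ => by
        funext w; simp [Pi.single_apply]
    rw [hsum, hφB]
  -- apply S to the hypothesis
  have hSQ : (∑ i, ∑ j, q i j • (X i * X j : MvPolynomial (Fin 3) F)) = 0 := by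
    have h0 := SR_ker σ S (fun w hw => by rw [hSX, dif_neg hw]) _ hQ
    have hrw : ∀ i j : Fin 3, S (q i j • (θ i * θ j)) = q i j • (X i * X j) :=
      fun i j => by rw [map_smul, map_mul, hSθ, hSθ]
    simp only [map_sum, hrw] at h0
    exact h0
  have hz : ∀ x : Fin 3 → F, ∑ i, ∑ j, q i j * (x i * x j) = 0 := by
    intro x
    have := congrArg (eval x) hSQ
    simpa [smul_eq_C_mul, map_sum] using this
  have h0 := hz ![1,0,0]
  have h1 := hz ![0,1,0]
  have h2 := hz ![0,0,1]
  have h01 := hz ![1,1,0]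
  have h02 := hz ![1,0,1]
  have h12 := hz ![0,1,1]
  simp only [Fin.sum_univ_three, Matrix.cons_val_zero, Matrix.cons_val_one,
    Matrix.head_cons, Matrix.cons_val_two, Matrix.tail_cons, mul_one, mul_zero,
    one_mul, zero_mul, add_zero, zero_add] at h0 h1 h2 h01 h02 h12
  have e00 : (C (q 0 0) : MvPolynomial V F) = 0 := by rw [show q 0 0 = 0 from by linear_combination h0, C_0]
  have e11 : (C (q 1 1) : MvPolynomial V F) = 0 := by rw [show q 1 1 = 0 from by linear_combination h1, C_0]
  have e22 : (C (q 2 2) : MvPolynomial V F) = 0 := by rw [show q 2 2 = 0 from by linear_combination h2, C_0]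
  have e01 : (C (q 0 1) + C (q 1 0) : MvPolynomial V F) = 0 := by
    rw [← C_add, show q 0 1 + q 1 0 = 0 from by linear_combination h01 - h0 - h1, C_0]
  have e02 : (C (q 0 2) + C (q 2 0) : MvPolynomial V F) = 0 := by
    rw [← C_add, show q 0 2 + q 2 0 = 0 from by linear_combination h02 - h0 - h2, C_0]
  have e12 : (C (q 1 2) + C (q 2 1) : MvPolynomial V F) = 0 := by
    rw [← C_add, show q 1 2 + q 2 1 = 0 from by linear_combination h12 - h1 - h2, C_0]
  simp only [Fin.sum_univ_three, smul_eq_C_mul]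
  linear_combination (θ 0 * θ 0) * e00 + (θ 1 * θ 1) * e11 + (θ 2 * θ 2) * e22 +
    (θ 0 * θ 1) * e01 + (θ 0 * θ 2) * e02 + (θ 1 * θ 2) * e12

lemma lin_dec (σ : Finset V) (θ : Fin 3 → MvPolynomial V F)
    (hθ : ∀ i, θ i ∈ homogeneousSubmodule V F 1)
    (hspan : ⊤ ≤ Submodule.span F (Set.range fun i => fun v : {x // x ∈ σ} =>
      coeff (Finsupp.single (v : V) 1) (θ i)))
    (ℓ : MvPolynomial V F) (hℓ : ℓ ∈ homogeneousSubmodule V F 1) :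
    ∃ (a : Fin 3 → F) (t : MvPolynomial V F),
      t ∈ Submodule.span F ((fun w => (X w : MvPolynomial V F)) '' {w | w ∉ σ}) ∧
      ℓ = (∑ i, a i • θ i) + t := by
  classical
  have hmem : (fun v : {x // x ∈ σ} => coeff (Finsupp.single (v : V) 1) ℓ) ∈
      Submodule.span F (Set.range fun i => fun v : {x // x ∈ σ} =>
        coeff (Finsupp.single (v : V) 1) (θ i)) := hspan trivial
  obtain ⟨a, ha⟩ := (Submodule.mem_span_range_iff_exists_fun F).mp hmem
  set t := ℓ - ∑ i, a i • θ i with ht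
  have htH : t ∈ homogeneousSubmodule V F 1 :=
    Submodule.sub_mem _ hℓ (Submodule.sum_mem _ fun i _ => Submodule.smul_mem _ _ (hθ i))
  have hcoeff0 : ∀ v ∈ σ, coeff (Finsupp.single v 1) t = 0 := by
    intro v hv
    have hav := congrFun ha ⟨v, hv⟩
    simp only [Finset.sum_apply, Pi.smul_apply, smul_eq_mul] at hav
    rw [ht, coeff_sub, coeff_sum]
    simp only [coeff_smul, smul_eq_mul]
    rw [← hav]
    ring
  refine ⟨a, t, ?_, by rw [ht]; ring⟩
  rw [lin_expand t htH]
  refine Submodule.sum_mem _ fun v _ => ?_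
  by_cases hv : v ∈ σ
  · rw [hcoeff0 v hv, C_0, zero_mul]
    exact Submodule.zero_mem _
  · rw [← smul_eq_C_mul]
    exact Submodule.smul_mem _ _ (Submodule.subset_span ⟨v, hv, rfl⟩)

end BN

/-- Babson–Nevo: for a connected sum `Δ = Γ₁ #_σ Γ₂` of simplicial
2-spheres, a common l.s.o.p. `Θ` for `F[Δ]` and `F[⟨σ⟩]` and a linear form `ω`: if
the degree-2 components of `F[Γᵢ]/(Θ,ω)` vanish for `i = 1, 2`, then the degree-2
component of `F[Δ]/(Θ,ω)` vanishes. -/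
theorem stmt19 {V F : Type*} [Fintype V] [DecidableEq V] [Field F]
    (Γ₁ Γ₂ : Set (Finset V))
    (h₁ : IsSimplicial2Sphere Γ₁) (h₂ : IsSimplicial2Sphere Γ₂)
    (σ : Finset V) (hσ : σ.card = 3)
    (hint : Γ₁ ∩ Γ₂ = {τ | τ ⊆ σ})
    (Δ : Set (Finset V)) (hΔ : Δ = (Γ₁ \ {σ}) ∪ (Γ₂ \ {σ}))
    (θ : Fin 3 → MvPolynomial V F)
    (hlsopΔ : IsLSOP F Δ θ) (hlsopσ : IsLSOP F {τ : Finset V | τ ⊆ σ} θ)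
    (ω : MvPolynomial V F) (hω : ω ∈ homogeneousSubmodule V F 1)
    (hvan₁ : ∀ p ∈ homogeneousSubmodule V F 2,
      p ∈ stanleyReisnerIdeal F Γ₁ ⊔ (Ideal.span (Set.range θ) ⊔ Ideal.span {ω}))
    (hvan₂ : ∀ p ∈ homogeneousSubmodule V F 2,
      p ∈ stanleyReisnerIdeal F Γ₂ ⊔ (Ideal.span (Set.range θ) ⊔ Ideal.span {ω})) :
    ∀ p ∈ homogeneousSubmodule V F 2,
      p ∈ stanleyReisnerIdeal F Δ ⊔ (Ideal.span (Set.range θ) ⊔ Ideal.span {ω}) := by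
  classical
  intro p hp
  obtain ⟨hcx1, -⟩ := h₁
  obtain ⟨hcx2, -⟩ := h₂
  obtain ⟨hθ, -⟩ := hlsopΔ
  obtain ⟨-, hfinσ⟩ := hlsopσ
  set I₁ := stanleyReisnerIdeal F Γ₁ with hI₁
  set I₂ := stanleyReisnerIdeal F Γ₂ with hI₂
  set Iσ := stanleyReisnerIdeal F {τ : Finset V | τ ⊆ σ} with hIσ
  have hsub1 : I₁ ≤ Iσ := Ideal.span_mono (by
    rintro m ⟨τ, hne, hτ, rfl⟩
    exact ⟨τ, hne, fun hss => hτ ((Set.ext_iff.mp hint τ).mpr hss).1, rfl⟩)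
  have hsub2 : I₂ ≤ Iσ := Ideal.span_mono (by
    rintro m ⟨τ, hne, hτ, rfl⟩
    exact ⟨τ, hne, fun hss => hτ ((Set.ext_iff.mp hint τ).mpr hss).2, rfl⟩)
  have hspan := BN.theta_span σ θ hθ hfinσ
  obtain ⟨a₁, g1, G1, ha₁, hg1, hG1, hp₁⟩ := BN.extract Γ₁ θ hθ ω hω p hp (hvan₁ p hp)
  obtain ⟨a₂, g2, G2, ha₂, hg2, hG2, hp₂⟩ := BN.extract Γ₂ θ hθ ω hω p hp (hvan₂ p hp)
  set c : MvPolynomial V F := (∑ i, θ i * (g2 i - g1 i)) + ω * (G2 - G1) with hc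
  have hpeq : a₁ + (∑ i, θ i * g1 i + ω * G1) = a₂ + (∑ i, θ i * g2 i + ω * G2) :=
    hp₁.symm.trans hp₂
  have hc2 : c = a₁ - a₂ := by
    rw [hc]
    simp only [Fin.sum_univ_three] at hpeq ⊢
    linear_combination -hpeq
  have hcIσ : c ∈ Iσ := hc2 ▸ Submodule.sub_mem _ (hsub1 ha₁) (hsub2 ha₂)
  set J := Submodule.span F ((fun w => (X w : MvPolynomial V F)) '' {w | w ∉ σ}) with hJ
  have hJIσ : ∀ x ∈ J, x ∈ Iσ := by
    intro x hx
    have hle : J ≤ Iσ.restrictScalars F := Submodule.span_le.mpr ?_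
    · exact hle hx
    rintro y ⟨w, hw, rfl⟩
    refine Ideal.subset_span ⟨{w}, Finset.singleton_nonempty w, ?_, ?_⟩
    · intro hss
      exact hw (Finset.singleton_subset_iff.mp hss)
    · rw [Finset.prod_singleton]
  choose av tv htJ hgd using fun i =>
    BN.lin_dec σ θ hθ hspan (g2 i - g1 i) (Submodule.sub_mem _ (hg2 i) (hg1 i))
  obtain ⟨dv, u, huJ, hGd⟩ :=
    BN.lin_dec σ θ hθ hspan (G2 - G1) (Submodule.sub_mem _ hG2 hG1)
  obtain ⟨wv, ωJ, hωJ, hωd⟩ := BN.lin_dec σ θ hθ hspan ω hω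
  set q : Fin 3 → Fin 3 → F := fun i k => av i k + wv i * dv k with hq
  set R : MvPolynomial V F := (∑ i, θ i * (tv i + dv i • ωJ)) + ω * u with hR
  have hcQR : c = (∑ i, ∑ j, q i j • (θ i * θ j)) + R := by
    have e0 := hgd 0; have e1 := hgd 1; have e2 := hgd 2
    rw [hc, hR, hq]
    simp only [Fin.sum_univ_three, smul_eq_C_mul, C_add, C_mul] at e0 e1 e2 hGd hωd ⊢
    linear_combination (θ 0) * e0 + (θ 1) * e1 + (θ 2) * e2 + ω * hGd +
      (C (dv 0) * θ 0 + C (dv 1) * θ 1 + C (dv 2) * θ 2) * hωd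
  have hQIσ : (∑ i, ∑ j, q i j • (θ i * θ j)) ∈ Iσ := by
    have hRIσ : R ∈ Iσ := by
      rw [hR]
      refine Submodule.add_mem _ (Submodule.sum_mem _ fun i _ => ?_) ?_
      · exact Ideal.mul_mem_left _ _ (hJIσ _
          (Submodule.add_mem _ (htJ i) (Submodule.smul_mem _ _ hωJ)))
      · exact Ideal.mul_mem_left _ _ (hJIσ _ huJ)
    have hsub := Submodule.sub_mem _ hcIσ hRIσ
    rw [hcQR, add_sub_cancel_right] at hsub
    exact hsub
  have hQ0 := BN.quad_zero σ hσ θ hθ hspan q hQIσ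
  have hcR : c = R := by rw [hcQR, hQ0, zero_add]
  -- split J into parts lying in I₁ and I₂
  have hsetJ : ((fun w => (X w : MvPolynomial V F)) '' {w | w ∉ σ}) =
      ((fun w => (X w : MvPolynomial V F)) '' {w | w ∉ σ ∧ {w} ∉ Γ₁}) ∪
      ((fun w => (X w : MvPolynomial V F)) '' {w | w ∉ σ ∧ {w} ∈ Γ₁}) := by
    have hsets : {w : V | w ∉ σ} = {w | w ∉ σ ∧ {w} ∉ Γ₁} ∪ {w | w ∉ σ ∧ {w} ∈ Γ₁} := by
      ext w
      constructor
      · intro hw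
        by_cases h1 : ({w} : Finset V) ∈ Γ₁
        · exact Or.inr ⟨hw, h1⟩
        · exact Or.inl ⟨hw, h1⟩
      · rintro (⟨hw, -⟩ | ⟨hw, -⟩) <;> exact hw
    rw [← Set.image_union, ← hsets]
  have hgen1 : ∀ w : V, {w} ∉ Γ₁ → (X w : MvPolynomial V F) ∈ I₁ := fun w hw =>
    Ideal.subset_span ⟨{w}, Finset.singleton_nonempty w, hw, (Finset.prod_singleton _ _).symm⟩
  have hgen2 : ∀ w : V, w ∉ σ → {w} ∈ Γ₁ → (X w : MvPolynomial V F) ∈ I₂ := by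
    intro w hwσ hwΓ
    refine Ideal.subset_span ⟨{w}, Finset.singleton_nonempty w, ?_,
      (Finset.prod_singleton _ _).symm⟩
    intro hw2
    have : ({w} : Finset V) ∈ Γ₁ ∩ Γ₂ := ⟨hwΓ, hw2⟩
    rw [hint] at this
    exact hwσ (Finset.singleton_subset_iff.mp this)
  have split : ∀ x ∈ J, ∃ y z, y ∈ I₁ ∧ z ∈ I₂ ∧ x = y + z := by
    intro x hx
    rw [hJ, hsetJ, Submodule.span_union] at hx
    obtain ⟨y, hy, z, hz, rfl⟩ := Submodule.mem_sup.mp hx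
    refine ⟨y, z, ?_, ?_, rfl⟩
    · have hle : Submodule.span F ((fun w => (X w : MvPolynomial V F)) ''
          {w | w ∉ σ ∧ {w} ∉ Γ₁}) ≤ I₁.restrictScalars F := Submodule.span_le.mpr ?_
      · exact hle hy
      rintro x ⟨w, ⟨hwσ, hwΓ⟩, rfl⟩
      exact hgen1 w hwΓ
    · have hle : Submodule.span F ((fun w => (X w : MvPolynomial V F)) ''
          {w | w ∉ σ ∧ {w} ∈ Γ₁}) ≤ I₂.restrictScalars F := Submodule.span_le.mpr ?_
      · exact hle hz
      rintro x ⟨w, ⟨hwσ, hwΓ⟩, rfl⟩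
      exact hgen2 w hwσ hwΓ
  choose sy sz hsy hsz hsyz using fun i =>
    split (tv i + dv i • ωJ) (Submodule.add_mem _ (htJ i) (Submodule.smul_mem _ _ hωJ))
  obtain ⟨uy, uz, huy, huz, huyz⟩ := split u huJ
  set e : MvPolynomial V F := (∑ i, θ i * sy i) + ω * uy with he
  set f : MvPolynomial V F := (∑ i, θ i * sz i) + ω * uz with hf
  have hef : c = e + f := by
    have k0 := hsyz 0; have k1 := hsyz 1; have k2 := hsyz 2
    rw [hcR, hR, he, hf]
    simp only [Fin.sum_univ_three] at k0 k1 k2 ⊢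
    linear_combination (θ 0) * k0 + (θ 1) * k1 + (θ 2) * k2 + ω * huyz
  have heI₁ : e ∈ I₁ := by
    rw [he]
    exact Submodule.add_mem _
      (Submodule.sum_mem _ fun i _ => Ideal.mul_mem_left _ _ (hsy i))
      (Ideal.mul_mem_left _ _ huy)
  have hfI₂ : f ∈ I₂ := by
    rw [hf]
    exact Submodule.add_mem _
      (Submodule.sum_mem _ fun i _ => Ideal.mul_mem_left _ _ (hsz i))
      (Ideal.mul_mem_left _ _ huz)
  have hKmem : ∀ (g : Fin 3 → MvPolynomial V F) (G : MvPolynomial V F),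
      (∑ i, θ i * g i) + ω * G ∈ Ideal.span (Set.range θ) ⊔ Ideal.span {ω} := by
    intro g G
    refine Submodule.add_mem _ (Ideal.mem_sup_left (Submodule.sum_mem _ fun i _ =>
      Ideal.mul_mem_right _ _ (Ideal.subset_span ⟨i, rfl⟩)))
      (Ideal.mem_sup_right (Ideal.mul_mem_right _ _ (Ideal.subset_span rfl)))
  have hAI₁ : a₁ - e ∈ I₁ := Submodule.sub_mem _ ha₁ heI₁
  have hAI₂ : a₁ - e ∈ I₂ := by
    have hxx : a₁ - e = a₂ + f := by linear_combination hef - hc2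
    rw [hxx]
    exact Submodule.add_mem _ ha₂ hfI₂
  have hAΔ : a₁ - e ∈ stanleyReisnerIdeal F Δ := by
    rw [BN.mem_SR_iff]
    intro m hm
    obtain ⟨τ₁, hne₁, hτ₁, hall₁⟩ := (BN.mem_SR_iff Γ₁ _).mp hAI₁ m hm
    obtain ⟨τ₂, hne₂, hτ₂, hall₂⟩ := (BN.mem_SR_iff Γ₂ _).mp hAI₂ m hm
    refine ⟨τ₁ ∪ τ₂, hne₁.mono Finset.subset_union_left, ?_, fun v hv => ?_⟩
    · intro hΔmem
      rw [hΔ] at hΔmem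
      rcases hΔmem with ⟨hg, -⟩ | ⟨hg, -⟩
      · exact hτ₁ (hcx1 _ hg _ Finset.subset_union_left)
      · exact hτ₂ (hcx2 _ hg _ Finset.subset_union_right)
    · rcases Finset.mem_union.mp hv with h | h
      exacts [hall₁ v h, hall₂ v h]
  have hfinal : p = (a₁ - e) + (((∑ i, θ i * (g1 i + sy i)) + ω * (G1 + uy))) := by
    rw [hp₁, he]
    simp only [Fin.sum_univ_three]
    ring
  rw [hfinal]
  exact Submodule.add_mem _ (Ideal.mem_sup_left hAΔ)
    (Ideal.mem_sup_right (hKmem _ _))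
end
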